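/- If f : S → ℝ is convex on a simplex S with vertices p₀,…,pₙ and barycenter p̄, then f(p̄) ≤ (1/vol(S)) ∫_S f(x) dx ≤ (1/(n+1)) ∑ᵢ₌₀ⁿ f(pᵢ) (Hermite–Hadamard inequality on simplices). -/

import Mathlib

open MeasureTheory

lemma affineMap_sum_apply {k V : Type*} [Ring k] [AddCommGroup V] [Module k V]
    {P1 : Type*} [AddCommGroup P1] [Module k P1]
    {ι : Type*} (s : Finset ι) (f : ι → (P1 →ᵃ[k] V)) (x : P1) :
    (∑ i ∈ s, f i) x = ∑ i ∈ s, f i x := by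
  induction s using Finset.cons_induction with
  | empty => simp
  | cons a s ha ih => rw [Finset.sum_cons, Finset.sum_cons, AffineMap.coe_add, Pi.add_apply, ih]

section helpers
variable {n : ℕ} (p : Fin (n + 1) → EuclideanSpace ℝ (Fin n))
  (b : AffineBasis (Fin (n+1)) ℝ (EuclideanSpace ℝ (Fin n)))
  (σ : Equiv.Perm (Fin (n+1)))

/-- The affine self-map determined by permuting the vertices of a simplex. -/
noncomputable def hhTmap : EuclideanSpace ℝ (Fin n) →ᵃ[ℝ] EuclideanSpace ℝ (Fin n) :=
  ∑ j, (AffineMap.lineMap (0 : EuclideanSpace ℝ (Fin n)) (p (σ j))).comp (b.coord j)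

lemma hhTmap_apply (x : EuclideanSpace ℝ (Fin n)) :
    hhTmap p b σ x = ∑ j, b.coord j x • p (σ j) := by
  rw [hhTmap, affineMap_sum_apply]
  simp [AffineMap.lineMap_apply]

lemma coord_hhTmap (hb : ⇑b = p) (x : EuclideanSpace ℝ (Fin n)) (i : Fin (n+1)) :
    b.coord i (hhTmap p b σ x) = b.coord (σ⁻¹ i) x := by
  have hw : ∑ k, b.coord (σ⁻¹ k) x = 1 := by
    rw [Fintype.sum_equiv σ⁻¹ (fun k => b.coord (σ⁻¹ k) x) (fun k => b.coord k x) (fun k => rfl)]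
    exact b.sum_coord_apply_eq_one x
  have h3 : hhTmap p b σ x = Finset.univ.affineCombination ℝ p (fun k => b.coord (σ⁻¹ k) x) := by
    rw [Finset.univ.affineCombination_eq_linear_combination _ _ hw, hhTmap_apply]
    exact Fintype.sum_equiv σ _ _ (fun j => by simp)
  rw [h3, ← hb]
  exact b.coord_apply_combination_of_mem (Finset.mem_univ i) hw

lemma hhTmap_hhTmap (hb : ⇑b = p) (x : EuclideanSpace ℝ (Fin n)) (i j : Fin (n+1)) :
    hhTmap p b (Equiv.swap i j) (hhTmap p b (Equiv.swap i j) x) = x := by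
  set σ := Equiv.swap i j with hσ
  rw [hhTmap_apply]
  have hc : ∀ k, b.coord k (hhTmap p b σ x) = b.coord (σ k) x := by
    intro k
    rw [coord_hhTmap p b σ hb, hσ, Equiv.swap_inv]
  simp_rw [hc]
  rw [Fintype.sum_equiv σ (fun k => b.coord (σ k) x • p (σ k)) (fun k => b.coord k x • p k)
    (fun k => rfl)]
  rw [← hb]
  exact b.linear_combination_coord_eq_self x

lemma hhTmap_vertex (hb : ⇑b = p) (k : Fin (n+1)) : hhTmap p b σ (p k) = p (σ k) := by
  rw [hhTmap_apply]
  have hco : ∀ j, b.coord j (p k) = if j = k then 1 else 0 := by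
    intro j; rw [← hb]; exact b.coord_apply j k
  simp_rw [hco]
  simp

lemma hhTmap_image (hb : ⇑b = p) :
    hhTmap p b σ '' (convexHull ℝ (Set.range p)) = convexHull ℝ (Set.range p) := by
  rw [AffineMap.image_convexHull]
  congr 1
  rw [← Set.range_comp]
  have : (hhTmap p b σ) ∘ p = p ∘ σ := by
    funext k; exact hhTmap_vertex p b σ hb k
  rw [this, Set.range_comp, Equiv.range_eq_univ, Set.image_univ]

lemma hhTmap_det (hb : ⇑b = p) (i j : Fin (n+1)) :
    |LinearMap.det (hhTmap p b (Equiv.swap i j)).linear| = 1 := by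
  have hcomp : (hhTmap p b (Equiv.swap i j)).comp (hhTmap p b (Equiv.swap i j)) =
      AffineMap.id ℝ _ := by
    ext x
    simp only [AffineMap.comp_apply, AffineMap.id_apply]
    rw [hhTmap_hhTmap p b hb x i j]
  have hlin : (hhTmap p b (Equiv.swap i j)).linear ∘ₗ (hhTmap p b (Equiv.swap i j)).linear =
      LinearMap.id := by
    have := congrArg AffineMap.linear hcomp
    exact this
  have hd : LinearMap.det (hhTmap p b (Equiv.swap i j)).linear *
      LinearMap.det (hhTmap p b (Equiv.swap i j)).linear = 1 := by
    rw [← LinearMap.det_comp, hlin, LinearMap.det_id]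
  nlinarith [abs_nonneg (LinearMap.det (hhTmap p b (Equiv.swap i j)).linear),
    abs_mul_abs_self (LinearMap.det (hhTmap p b (Equiv.swap i j)).linear)]

lemma hhTmap_integral (hb : ⇑b = p) (i j : Fin (n+1)) {S : Set (EuclideanSpace ℝ (Fin n))}
    (hSm : MeasurableSet S) (hSim : hhTmap p b (Equiv.swap i j) '' S = S)
    (g : EuclideanSpace ℝ (Fin n) → ℝ) :
    ∫ x in S, g x = ∫ x in S, g (hhTmap p b (Equiv.swap i j) x) := by
  set T := hhTmap p b (Equiv.swap i j) with hT
  set L : EuclideanSpace ℝ (Fin n) →L[ℝ] EuclideanSpace ℝ (Fin n) :=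
    LinearMap.toContinuousLinearMap T.linear with hL
  have hder : ∀ x ∈ S, HasFDerivWithinAt T L S x := by
    intro x _
    have h2 : HasFDerivAt (fun y => T.linear y + T 0) L x :=
      (L.hasFDerivAt).add_const (T 0)
    have h3 : (fun y => T.linear y + T 0) = ⇑T := by
      funext y
      rw [AffineMap.decomp T]
      simp
    rw [h3] at h2
    exact h2.hasFDerivWithinAt
  have hinj : Set.InjOn T S := by
    intro x _ y _ hxy
    have := congrArg T hxy
    rwa [hhTmap_hhTmap p b hb x i j, hhTmap_hhTmap p b hb y i j] at this
  have hdet : |L.det| = 1 := hhTmap_det p b hb i j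
  calc ∫ x in S, g x = ∫ x in T '' S, g x := by rw [hSim]
    _ = ∫ x in S, |L.det| • g (T x) :=
        integral_image_eq_integral_abs_det_fderiv_smul volume hSm (fun x hx => hder x hx) hinj g
    _ = ∫ x in S, g (T x) := by simp [hdet]

end helpers

set_option maxHeartbeats 1000000 in
theorem hermite_hadamard_simplex {n : ℕ}
    (p : Fin (n + 1) → EuclideanSpace ℝ (Fin n)) (hp : AffineIndependent ℝ p)
    (S : Set (EuclideanSpace ℝ (Fin n))) (hS : S = convexHull ℝ (Set.range p))
    (pbar : EuclideanSpace ℝ (Fin n)) (hpbar : pbar = ((n : ℝ) + 1)⁻¹ • ∑ i, p i)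
    (f : EuclideanSpace ℝ (Fin n) → ℝ) (hf : ConvexOn ℝ S f)
    (hint : IntegrableOn f S volume) :
    f pbar ≤ ((volume S).toReal)⁻¹ * ∫ x in S, f x ∧
      ((volume S).toReal)⁻¹ * ∫ x in S, f x ≤ ((n : ℝ) + 1)⁻¹ * ∑ i, f (p i) := by
  have tot : affineSpan ℝ (Set.range p) = ⊤ := by
    rw [hp.affineSpan_eq_top_iff_card_eq_finrank_add_one]
    simp
  set b : AffineBasis (Fin (n+1)) ℝ (EuclideanSpace ℝ (Fin n)) := ⟨p, hp, tot⟩ with hbdef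
  have hb : ⇑b = p := rfl
  -- basic facts about S
  have hScvx : Convex ℝ S := hS ▸ convex_convexHull ℝ _
  have hS_cpt : IsCompact S := hS ▸ ((Set.finite_range p).isCompact_convexHull ℝ)
  have hSm : MeasurableSet S := hS_cpt.isClosed.measurableSet
  -- coordinates
  have hsum1 : ∀ x, ∑ i, b.coord i x = 1 := fun x => b.sum_coord_apply_eq_one x
  have hrepr : ∀ x, ∑ i, b.coord i x • p i = x := by
    intro x
    have := b.linear_combination_coord_eq_self x
    rwa [hb] at this
  have hnn : ∀ x ∈ S, ∀ i, 0 ≤ b.coord i x := by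
    intro x hx i
    have hSeq : S = { y | ∀ i, 0 ≤ b.coord i y } := by
      rw [hS, ← hb, ← b.convexHull_eq_nonneg_coord]
    rw [hSeq] at hx
    exact hx i
  have hpcont : ∀ i, Continuous (b.coord i) := fun i =>
    (b.coord i).continuous_of_finiteDimensional
  have hInt : ∀ i, IntegrableOn (fun x => b.coord i x) S volume := fun i =>
    (hpcont i).continuousOn.integrableOn_compact hS_cpt
  -- the coordinate integrals
  set I : Fin (n+1) → ℝ := fun i => ∫ x in S, b.coord i x with hIdef
  have hIeq : ∀ i j, I i = I j := by
    intro i j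
    have hSim : hhTmap p b (Equiv.swap i j) '' S = S := by
      rw [hS]; exact hhTmap_image p b _ hb
    have h1 := hhTmap_integral p b hb i j hSm hSim (fun x => b.coord i x)
    have h2 : ∀ x, b.coord i (hhTmap p b (Equiv.swap i j) x) = b.coord j x := by
      intro x
      rw [coord_hhTmap p b _ hb, Equiv.swap_inv, Equiv.swap_apply_left]
    rw [hIdef]
    simp only []
    rw [h1]
    simp_rw [h2]
  have hIsum : ∑ i, I i = (volume S).toReal := by
    rw [hIdef]
    simp only []
    rw [← integral_finset_sum _ (fun i _ => hInt i)]
    have : ∀ x, ∑ i, b.coord i x = (1:ℝ) := hsum1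
    calc ∫ x in S, ∑ i, b.coord i x = ∫ _x in S, (1:ℝ) := by
          apply integral_congr_ae
          filter_upwards with x using hsum1 x
      _ = (volume S).toReal := by rw [setIntegral_const, measureReal_def]; simp
  have hIval : ∀ i, I i = (volume S).toReal / ((n : ℝ) + 1) := by
    intro i
    have : ∑ j, I j = (↑n + 1) * I i := by
      rw [Finset.sum_congr rfl (fun j _ => hIeq j i)]
      simp [mul_comm]
    rw [← hIsum, this]
    field_simp
  -- positivity of the volume
  have hpbar_mem : pbar ∈ interior S := by
    have hcen := b.centroid_mem_interior_convexHull
    have hc : Finset.univ.centroid ℝ ⇑b = pbar := by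
      rw [hb, Finset.centroid_def,
        Finset.univ.affineCombination_eq_linear_combination _ _
          (Finset.univ.sum_centroidWeights_eq_one_of_nonempty ℝ Finset.univ_nonempty)]
      rw [hpbar, Finset.smul_sum]
      apply Finset.sum_congr rfl
      intro i _
      rw [Finset.centroidWeights_apply]
      congr 1
      simp [Finset.card_univ]
    rw [hc, hb] at hcen
    rwa [hS]
  have hvolpos : 0 < volume S := MeasureTheory.Measure.measure_pos_of_nonempty_interior volume ⟨pbar, hpbar_mem⟩
  have hvolfin : volume S < ⊤ := hS_cpt.measure_lt_top
  have vpos : 0 < (volume S).toReal := ENNReal.toReal_pos hvolpos.ne' hvolfin.ne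
  -- barycenter
  have hid_int : IntegrableOn (fun x => x) S volume :=
    continuous_id.continuousOn.integrableOn_compact hS_cpt
  have hbary : ∫ x in S, x = (volume S).toReal • pbar := by
    have h1 : ∫ x in S, x = ∫ x in S, ∑ i, b.coord i x • p i := by
      apply integral_congr_ae
      filter_upwards with x using (hrepr x).symm
    rw [h1, integral_finset_sum _ (fun i _ => (hInt i).smul_const (p i))]
    have h2 : ∀ i, ∫ x in S, b.coord i x • p i = I i • p i := fun i =>
      integral_smul_const (fun x => b.coord i x) (p i)
    rw [Finset.sum_congr rfl (fun i _ => h2 i)]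
    rw [Finset.sum_congr rfl (fun i _ => by rw [hIval i])]
    rw [← Finset.smul_sum, hpbar, smul_smul]
    congr 1
  -- right inequality
  have hub : ∀ x ∈ S, f x ≤ ∑ i, b.coord i x * f (p i) := by
    intro x hx
    have hmem : ∀ i ∈ Finset.univ, p i ∈ S := fun i _ =>
      hS ▸ subset_convexHull ℝ _ ⟨i, rfl⟩
    have := hf.map_sum_le (fun i _ => hnn x hx i) (hsum1 x) hmem
    rwa [hrepr x] at this
  have hRHSint : IntegrableOn (fun x => ∑ i, b.coord i x * f (p i)) S volume :=
    integrable_finset_sum _ (fun i _ => (hInt i).mul_const _)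
  have hIval' : ∑ i, I i * f (p i) = (volume S).toReal * (((n : ℝ) + 1)⁻¹ * ∑ i, f (p i)) := by
    calc ∑ i, I i * f (p i)
        = ∑ i, (volume S).toReal * (((n : ℝ) + 1)⁻¹ * f (p i)) := by
          apply Finset.sum_congr rfl
          intro i _
          rw [hIval i]
          ring
      _ = (volume S).toReal * ∑ i, ((n : ℝ) + 1)⁻¹ * f (p i) := by rw [Finset.mul_sum]
      _ = (volume S).toReal * (((n : ℝ) + 1)⁻¹ * ∑ i, f (p i)) := by rw [← Finset.mul_sum]
  have hfsum : ∫ x in S, f x ≤ (volume S).toReal * (((n : ℝ) + 1)⁻¹ * ∑ i, f (p i)) := by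
    have h1 := setIntegral_mono_on hint hRHSint hSm hub
    rw [integral_finset_sum _ (fun i _ => (hInt i).mul_const _)] at h1
    have h2 : ∀ i, ∫ x in S, b.coord i x * f (p i) = I i * f (p i) := fun i =>
      integral_mul_const _ _
    rw [Finset.sum_congr rfl (fun i _ => h2 i), hIval'] at h1
    exact h1
  have hright : ((volume S).toReal)⁻¹ * ∫ x in S, f x ≤ ((n : ℝ) + 1)⁻¹ * ∑ i, f (p i) := by
    have := mul_le_mul_of_nonneg_left hfsum (inv_nonneg.mpr vpos.le)
    rwa [← mul_assoc, inv_mul_cancel₀ vpos.ne', one_mul] at this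
  -- left inequality
  set U := interior S with hUdef
  have hUopen : IsOpen U := isOpen_interior
  have hUconv : Convex ℝ U := hScvx.interior
  have hfU : ConvexOn ℝ U f := hf.subset interior_subset hUconv
  have hfc : ContinuousOn f U := hf.continuousOn_interior
  set A : Set ((EuclideanSpace ℝ (Fin n)) × ℝ) := {q | q.1 ∈ U ∧ f q.1 < q.2} with hA
  have hAconv : Convex ℝ A := by
    rintro q hq r hr a c ha hc hac
    have hq1 : (a • q + c • r).1 = a • q.1 + c • r.1 := rfl
    have hq2 : (a • q + c • r).2 = a * q.2 + c * r.2 := rfl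
    constructor
    · rw [hq1]; exact hUconv hq.1 hr.1 ha hc hac
    · rw [hq1, hq2]
      have h1 : f (a • q.1 + c • r.1) ≤ a * f q.1 + c * f r.1 := hfU.2 hq.1 hr.1 ha hc hac
      have h2 : a * f q.1 + c * f r.1 < a * q.2 + c * r.2 := by
        rcases eq_or_lt_of_le ha with ha0 | ha0
        · have hc1 : c = 1 := by linarith
          rw [← ha0, hc1]
          simpa using hr.2
        · have h3 : a * f q.1 < a * q.2 := (mul_lt_mul_iff_right₀ ha0).mpr hq.2
          have h4 : c * f r.1 ≤ c * r.2 := mul_le_mul_of_nonneg_left (le_of_lt hr.2) hc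
          linarith
      linarith
  have hAopen : IsOpen A := by
    have heq : A = (U ×ˢ (Set.univ : Set ℝ)) ∩
        ((fun q : (EuclideanSpace ℝ (Fin n)) × ℝ => f q.1 - q.2) ⁻¹' (Set.Iio 0)) := by
      ext q
      simp only [hA, Set.mem_setOf_eq, Set.mem_inter_iff, Set.mem_prod, Set.mem_univ,
        and_true, Set.mem_preimage, Set.mem_Iio, sub_neg]
    rw [heq]
    apply ContinuousOn.isOpen_inter_preimage
    · exact (hfc.comp continuous_fst.continuousOn (fun q hq => hq.1)).sub
        continuous_snd.continuousOn
    · exact hUopen.prod isOpen_univ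
    · exact isOpen_Iio
  have hnotA : (pbar, f pbar) ∉ A := fun h => lt_irrefl _ h.2
  obtain ⟨L, hL⟩ := geometric_hahn_banach_open_point hAconv hAopen hnotA
  set c := L ((0 : EuclideanSpace ℝ (Fin n)), (1:ℝ)) with hcdef
  set l : EuclideanSpace ℝ (Fin n) →L[ℝ] ℝ :=
    L.comp (ContinuousLinearMap.inl ℝ (EuclideanSpace ℝ (Fin n)) ℝ) with hldef
  have hsplit : ∀ (x : EuclideanSpace ℝ (Fin n)) (t : ℝ), L (x, t) = l x + t * c := by
    intro x t
    have h0 : (x, t) = (x, (0:ℝ)) + t • ((0 : EuclideanSpace ℝ (Fin n)), (1:ℝ)) := by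
      simp [Prod.ext_iff]
    rw [h0, L.map_add, L.map_smul, smul_eq_mul]
    rfl
  have hcneg : c < 0 := by
    have h := hL (pbar, f pbar + 1) ⟨hpbar_mem, by show f pbar < f pbar + 1; linarith⟩
    rw [hsplit, hsplit] at h
    linarith
  have key : ∀ x ∈ U, l x + f x * c ≤ l pbar + f pbar * c := by
    intro x hx
    by_contra hcon
    push_neg at hcon
    set gap := (l x + f x * c) - (l pbar + f pbar * c) with hgap
    have hgap0 : 0 < gap := by rw [hgap]; linarith
    have hepos : 0 < gap / (-c) := div_pos hgap0 (by linarith)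
    have h := hL (x, f x + gap / (-c)) ⟨hx, by show f x < f x + gap / (-c); linarith⟩
    rw [hsplit, hsplit] at h
    have hcne : c ≠ 0 := ne_of_lt hcneg
    have hmul : gap / (-c) * c = -gap := by
      rw [div_neg, neg_mul, div_mul_cancel₀ _ hcne]
    nlinarith [h, hmul]
  set g : EuclideanSpace ℝ (Fin n) → ℝ := fun x => f pbar + (l pbar - l x) / c with hgdef
  have hgle : ∀ x ∈ U, g x ≤ f x := by
    intro x hx
    have hk := key x hx
    have h2 : (l pbar - l x) / c ≤ f x - f pbar :=
      (div_le_iff_of_neg hcneg).mpr (by linarith)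
    rw [hgdef]
    simp only []
    linarith
  have hg_cont : Continuous g := by
    apply continuous_const.add
    exact (continuous_const.sub l.continuous).div_const c
  have hg_int : IntegrableOn g S volume := hg_cont.continuousOn.integrableOn_compact hS_cpt
  have hSU0 : volume (S \ U) = 0 := by
    have hsub : S \ U ⊆ frontier S := by
      intro x hx
      rw [frontier, hS_cpt.isClosed.closure_eq]
      exact ⟨hx.1, hx.2⟩
    exact measure_mono_null hsub (hScvx.addHaar_frontier volume)
  have hae : ∀ᵐ x ∂(volume.restrict S), g x ≤ f x := by
    rw [ae_restrict_iff' hSm]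
    have h1 : ∀ᵐ (x : EuclideanSpace ℝ (Fin n)) ∂volume, x ∉ S \ U := by
      rw [ae_iff]
      simp only [not_not]; exact hSU0
    filter_upwards [h1] with x hx hxS
    by_cases hU : x ∈ U
    · exact hgle x hU
    · exact absurd ⟨hxS, hU⟩ hx
  have hgf : ∫ x in S, g x ≤ ∫ x in S, f x := setIntegral_mono_ae_restrict hg_int hint hae
  have hl_int : IntegrableOn (fun x => l x) S volume :=
    l.continuous.continuousOn.integrableOn_compact hS_cpt
  have hlval : ∫ x in S, l x = (volume S).toReal * l pbar := by
    rw [ContinuousLinearMap.integral_comp_comm l hid_int, hbary, l.map_smul, smul_eq_mul]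
  have hgval : ∫ x in S, g x = (volume S).toReal * f pbar := by
    have he : g = fun x => (f pbar + l pbar / c) + (-(1/c)) * l x := by
      funext x
      rw [hgdef]
      field_simp
      ring
    rw [he, integral_add (integrableOn_const (C := f pbar + l pbar / c) hvolfin.ne) (hl_int.const_mul _),
      integral_const_mul, hlval, setIntegral_const, measureReal_def, smul_eq_mul]
    field_simp
    ring
  have hleft : f pbar ≤ ((volume S).toReal)⁻¹ * ∫ x in S, f x := by
    have h1 : (volume S).toReal * f pbar ≤ ∫ x in S, f x := hgval ▸ hgf
    have := mul_le_mul_of_nonneg_left h1 (inv_nonneg.mpr vpos.le)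
    rwa [← mul_assoc, inv_mul_cancel₀ vpos.ne', one_mul] at this
  exact ⟨hleft, hright⟩
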